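/- arXiv:2308.10463 — 2 statements merged into one kernel-verified Lean document; each statement's English description precedes it below -/
import Mathlib

section
/- Let G be a graph, π = {W_1,…,W_m} a clique vertex-partition of G, and G^π the fully clique-whiskered graph obtained by adding new vertices y_1,…,y_m and edges {x, y_i} for every x ∈ W_i. Then ord-match(G^π) = m; moreover, choosing any w_i ∈ W_i, the matching {{w_i, y_i} : 1 ≤ i ≤ m} is an m-ordered matching of G^π, so m-ord-match(G^π) = ord-match(G^π). -/
/-- The fully clique-whiskered graph `G^π` attached to `G` and a clique
vertex-partition given by `W : V → Fin m` (vertex `u` lies in the clique `W u`):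
add new vertices `y_1,…,y_m` (the `Sum.inr` vertices) and edges `{x, y_c}` for every
`x` with `W x = c`. -/
def cliqueWhisker {V : Type*} (G : SimpleGraph V) {m : ℕ} (W : V → Fin m) :
    SimpleGraph (V ⊕ Fin m) where
  Adj x y := match x, y with
    | .inl u, .inl v => G.Adj u v
    | .inl u, .inr c => W u = c
    | .inr c, .inl u => W u = c
    | .inr _, .inr _ => False
  symm := ⟨by rintro (u|c) (v|d) h <;> simp_all; exact h.symm⟩
  loopless := ⟨by rintro (u|c) h <;> simp_all⟩

/-- `s`-ordered matching (`r ≥ s`, nonempty, pairwise disjoint edges, `a`-side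
independent, `a i ∼ b j ⟹ i = j ∨ i ≤ j − s`). -/
def IsSOrderedMatching {V : Type*} (G : SimpleGraph V) (s r : ℕ)
    (a b : Fin r → V) : Prop :=
  1 ≤ r ∧ s ≤ r ∧
  (∀ i, G.Adj (a i) (b i)) ∧
  Function.Injective (Sum.elim a b) ∧
  (∀ i j, ¬ G.Adj (a i) (a j)) ∧
  (∀ i j : Fin r, G.Adj (a i) (b j) → i = j ∨ (i : ℕ) + s ≤ (j : ℕ))

/-- Ordered matching (nonempty, `a`-side independent, `a i ∼ b j ⟹ i ≤ j`). -/
def IsOrderedMatching {V : Type*} (G : SimpleGraph V) (r : ℕ)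
    (a b : Fin r → V) : Prop :=
  1 ≤ r ∧
  (∀ i, G.Adj (a i) (b i)) ∧
  Function.Injective (Sum.elim a b) ∧
  (∀ i j, ¬ G.Adj (a i) (a j)) ∧
  (∀ i j : Fin r, G.Adj (a i) (b j) → i ≤ j)

/-- The ordered matching number (as a natural number; `0` if there is none). -/
noncomputable def ordMatchNum {V : Type*} (G : SimpleGraph V) : ℕ :=
  sSup {r | ∃ a b : Fin r → V, IsOrderedMatching G r a b}

/-- The `s`-ordered matching number (as a natural number; `0` if there is none). -/
noncomputable def sOrdMatchNum {V : Type*} (G : SimpleGraph V) (s : ℕ) : ℕ :=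
  sSup {r | ∃ a b : Fin r → V, IsSOrderedMatching G s r a b}

/-- for a clique vertex-partition `π = {W_1,…,W_m}` of `G` (encoded by
`W : V → Fin m`, surjective, with each fiber a clique), `ord-match(G^π) = m`; moreover
for any choice `w c ∈ W_c`, the matching `{{w_c, y_c} | 1 ≤ c ≤ m}` (with the whisker
vertices `y_c` as the independent side) is an `m`-ordered matching of `G^π`, so
`m-ord-match(G^π) = ord-match(G^π)`. -/
theorem cliqueWhisker_ordMatch {V : Type*} (G : SimpleGraph V) (m : ℕ) (hm : 0 < m)
    (W : V → Fin m) (hclique : ∀ u v, u ≠ v → W u = W v → G.Adj u v)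
    (hsurj : Function.Surjective W)
    (w : Fin m → V) (hw : ∀ c, W (w c) = c) :
    ordMatchNum (cliqueWhisker G W) = m ∧
    IsSOrderedMatching (cliqueWhisker G W) m m
      (fun c => Sum.inr c) (fun c => Sum.inl (w c)) ∧
    sOrdMatchNum (cliqueWhisker G W) m = ordMatchNum (cliqueWhisker G W) := by
  -- The canonical matching
  have hmatch : IsSOrderedMatching (cliqueWhisker G W) m m
      (fun c => Sum.inr c) (fun c => Sum.inl (w c)) := by
    refine ⟨hm, le_refl m, ?_, ?_, ?_, ?_⟩
    · intro i
      show W (w i) = i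
      exact hw i
    · rintro (i|i) (j|j) h <;> simp_all
      have : W (w i) = W (w j) := by rw [h]
      rwa [hw, hw] at this
    · intro i j
      show ¬ False
      exact not_false
    · intro i j h
      left
      have : W (w j) = i := h
      rw [hw] at this
      exact this.symm
  -- Upper bound: any ordered matching has size ≤ m
  have hub : ∀ r (a b : Fin r → V ⊕ Fin m),
      IsOrderedMatching (cliqueWhisker G W) r a b → r ≤ m := by
    rintro r a b ⟨_, hadj, hinj, hindep, _⟩
    have hainj : Function.Injective a := by
      intro i j hij
      have := hinj (a₁ := Sum.inl i) (a₂ := Sum.inl j) (by simpa using hij)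
      simpa using this
    let f : Fin r → Fin m := fun i => match h : a i with
      | .inl u => W u
      | .inr c => c
    have hfinj : Function.Injective f := by
      intro i j hij
      by_contra hne
      have hane : a i ≠ a j := fun h => hne (hainj h)
      simp only [f] at hij
      rcases ha : a i with u | c <;> rcases hb : a j with v | d
      · rw [ha, hb] at hij hane
        simp only at hij
        have huv : u ≠ v := fun h => hane (by rw [h])
        have : (cliqueWhisker G W).Adj (a i) (a j) := by
          rw [ha, hb]; exact hclique u v huv hij
        exact hindep i j this
      · rw [ha, hb] at hij
        simp only at hij
        have : (cliqueWhisker G W).Adj (a i) (a j) := by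
          rw [ha, hb]; exact hij
        exact hindep i j this
      · rw [ha, hb] at hij
        simp only at hij
        have : (cliqueWhisker G W).Adj (a i) (a j) := by
          rw [ha, hb]; exact hij.symm
        exact hindep i j this
      · rw [ha, hb] at hij hane
        simp only at hij
        exact hane (by rw [hij])
    simpa using Fintype.card_le_of_injective f hfinj
  -- the canonical matching as an ordered matching
  have hord : IsOrderedMatching (cliqueWhisker G W) m
      (fun c => Sum.inr c) (fun c => Sum.inl (w c)) := by
    obtain ⟨h1, _, h3, h4, h5, h6⟩ := hmatch
    refine ⟨h1, h3, h4, h5, fun i j h => ?_⟩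
    rcases h6 i j h with h | h
    · exact le_of_eq h
    · exact le_of_lt (by omega)
  have hmemO : m ∈ {r | ∃ a b : Fin r → (V ⊕ Fin m),
      IsOrderedMatching (cliqueWhisker G W) r a b} := ⟨_, _, hord⟩
  have hbddO : BddAbove {r | ∃ a b : Fin r → (V ⊕ Fin m),
      IsOrderedMatching (cliqueWhisker G W) r a b} := by
    refine ⟨m, fun r hr => ?_⟩
    obtain ⟨a, b, h⟩ := hr
    exact hub r a b h
  have hO : ordMatchNum (cliqueWhisker G W) = m := by
    apply le_antisymm
    · exact csSup_le ⟨m, hmemO⟩ (fun r hr => by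
        obtain ⟨a, b, h⟩ := hr; exact hub r a b h)
    · exact le_csSup hbddO hmemO
  refine ⟨hO, hmatch, ?_⟩
  rw [hO]
  have hmemS : m ∈ {r | ∃ a b : Fin r → (V ⊕ Fin m),
      IsSOrderedMatching (cliqueWhisker G W) m r a b} := ⟨_, _, hmatch⟩
  apply le_antisymm
  · refine csSup_le ⟨m, hmemS⟩ (fun r hr => ?_)
    obtain ⟨a, b, h1, h2, h3, h4, h5, h6⟩ := hr
    exact hub r a b ⟨h1, h3, h4, h5, fun i j h => by
      rcases h6 i j h with h | h
      · exact le_of_eq h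
      · exact le_of_lt (by omega)⟩
  · refine le_csSup ⟨m, fun r hr => ?_⟩ hmemS
    obtain ⟨a, b, h1, h2, h3, h4, h5, h6⟩ := hr
    exact hub r a b ⟨h1, h3, h4, h5, fun i j h => by
      rcases h6 i j h with h | h
      · exact le_of_eq h
      · exact le_of_lt (by omega)⟩
end

section
/- For any graph G and integer k ≥ 1, the polarization of the k-th symbolic power of the cover ideal J(G) equals the cover ideal of the graph G_k: (J(G)^{(k)})^{pol} = J(G_k). -/
open MvPolynomial

/-- The "polarization graph" `G_k`: vertices `x_{i,p}` (`p ∈ Fin k` stands for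
`p+1 ∈ {1,…,k}`), `x_{i,p} ∼ x_{j,q}` iff `x_i ∼ x_j` in `G` and `p + q ≤ k + 1`. -/
def polGraph {V : Type*} (G : SimpleGraph V) (k : ℕ) : SimpleGraph (V × Fin k) where
  Adj a b := G.Adj a.1 b.1 ∧ ((a.2 : ℕ) + 1) + ((b.2 : ℕ) + 1) ≤ k + 1
  symm := ⟨by rintro a b ⟨h, hle⟩; exact ⟨h.symm, by omega⟩⟩
  loopless := ⟨by rintro a ⟨h, -⟩; exact absurd rfl (G.ne_of_adj h)⟩

variable {K : Type*} [Field K]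

/-- The cover ideal `J(H) = ⋂_{{u,v} ∈ E(H)} (x_u, x_v)`. -/
noncomputable def coverIdeal {W : Type*} (H : SimpleGraph W) : Ideal (MvPolynomial W K) :=
  ⨅ (u : W), ⨅ (v : W), ⨅ (_ : H.Adj u v), Ideal.span {X u, X v}

/-- The `k`-th symbolic power of the cover ideal:
`J(G)^{(k)} = ⋂_{{u,v} ∈ E(G)} (x_u, x_v)^k`. -/
noncomputable def coverIdealSymbPow {W : Type*} (H : SimpleGraph W) (k : ℕ) :
    Ideal (MvPolynomial W K) :=
  ⨅ (u : W), ⨅ (v : W), ⨅ (_ : H.Adj u v), (Ideal.span {X u, X v}) ^ k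

/-- The polarization of the monomial `x^a` (all exponents `≤ k`) in the polynomial ring
`K[x_{i,p} : i ∈ V, p ∈ Fin k]`: replace `x_i^{a_i}` by `x_{i,1} x_{i,2} ⋯ x_{i,a_i}`. -/
noncomputable def polMonomial {V : Type*} [Fintype V] (K : Type*) [Field K] (k : ℕ)
    (a : V →₀ ℕ) : MvPolynomial (V × Fin k) K :=
  ∏ i : V, ∏ p : Fin k, if (p : ℕ) < a i then X (i, p) else 1

/-- The polarization of a monomial ideal `I` (whose relevant generators have all
exponents `≤ k`): the ideal generated by the polarizations of the monomials of `I`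
with exponents `≤ k` (this ideal is generated by the polarizations of the minimal
monomial generators of `I`). -/
noncomputable def polIdeal {V : Type*} [Fintype V] (K : Type*) [Field K] (k : ℕ)
    (I : Ideal (MvPolynomial V K)) : Ideal (MvPolynomial (V × Fin k) K) :=
  Ideal.span {f | ∃ a : V →₀ ℕ, (monomial a (1 : K)) ∈ I ∧ (∀ i, a i ≤ k) ∧
    f = polMonomial K k a}

/-! ### Auxiliary lemmas -/

lemma prod_monomial_one {α σ : Type*} (s : Finset α) (g : α → (σ →₀ ℕ)) :
    (∏ x ∈ s, monomial (g x) (1 : K)) = monomial (∑ x ∈ s, g x) 1 := by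
  classical
  induction s using Finset.cons_induction with
  | empty => simp
  | cons a s ha ih => rw [Finset.prod_cons, Finset.sum_cons, ih, monomial_mul, mul_one]

lemma mem_span_pair_support {σ : Type*} (u v : σ) {f : MvPolynomial σ K}
    (hf : f ∈ Ideal.span {X u, X v}) : ∀ c ∈ f.support, 1 ≤ c u + c v := by
  classical
  rw [Ideal.mem_span_pair] at hf
  obtain ⟨p, q, rfl⟩ := hf
  intro c hc
  have := MvPolynomial.support_add hc
  rw [Finset.mem_union] at this
  rcases this with h | h <;>
  · have h2 := MvPolynomial.support_mul _ _ h
    rw [Finset.mem_add] at h2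
    obtain ⟨d, hd, e, he, rfl⟩ := h2
    rw [MvPolynomial.support_X] at he
    simp only [Finset.mem_singleton] at he
    subst he
    simp [Finsupp.add_apply, Finsupp.single_apply]
    split_ifs <;> omega

lemma mem_pow_span_pair {σ : Type*} (u v : σ) (k : ℕ) {f : MvPolynomial σ K}
    (hf : f ∈ (Ideal.span {X u, X v} : Ideal (MvPolynomial σ K)) ^ k) :
    ∀ c ∈ f.support, k ≤ c u + c v := by
  classical
  induction k generalizing f with
  | zero => intro c hc; omega
  | succ k ih =>
    rw [pow_succ] at hf
    refine Submodule.mul_induction_on hf ?_ ?_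
    · intro g hg h hh c hc
      have h2 := MvPolynomial.support_mul _ _ hc
      rw [Finset.mem_add] at h2
      obtain ⟨d, hd, e, he, rfl⟩ := h2
      have h3 := ih hg d hd
      have h4 := mem_span_pair_support u v hh e he
      simp only [Finsupp.add_apply]
      omega
    · intro g h hg hh c hc
      have := MvPolynomial.support_add hc
      rw [Finset.mem_union] at this
      rcases this with h' | h'
      · exact hg c h'
      · exact hh c h'

lemma support_le_mem_pow {σ : Type*} {u v : σ} (huv : u ≠ v) (k : ℕ) {f : MvPolynomial σ K}
    (hf : ∀ c ∈ f.support, k ≤ c u + c v) :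
    f ∈ (Ideal.span {X u, X v} : Ideal (MvPolynomial σ K)) ^ k := by
  classical
  rw [← support_sum_monomial_coeff f]
  apply Ideal.sum_mem
  intro c hc
  have h := hf c hc
  have hle : Finsupp.single u (c u) + Finsupp.single v (c v) ≤ c := by
    rw [Finsupp.le_def]
    intro j
    rw [Finsupp.add_apply, Finsupp.single_apply, Finsupp.single_apply]
    by_cases hju : u = j <;> by_cases hjv : v = j
    · exact absurd (hju.trans hjv.symm) huv
    all_goals simp [hju, hjv]
  have key : (monomial c (coeff c f) : MvPolynomial σ K) =
      monomial (c - (Finsupp.single u (c u) + Finsupp.single v (c v))) (coeff c f) *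
        (X u ^ (c u) * X v ^ (c v)) := by
    rw [X_pow_eq_monomial, X_pow_eq_monomial, monomial_mul, mul_one, monomial_mul, mul_one,
      tsub_add_cancel_of_le hle]
  rw [key]
  apply Ideal.mul_mem_left
  have h1 : X u ^ (c u) * X v ^ (c v) ∈
      (Ideal.span {X u, X v} : Ideal (MvPolynomial σ K)) ^ (c u + c v) := by
    rw [pow_add]
    exact Ideal.mul_mem_mul (Ideal.pow_mem_pow (Ideal.subset_span (by simp)) _)
      (Ideal.pow_mem_pow (Ideal.subset_span (by simp)) _)
  exact Ideal.pow_le_pow_right h h1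

lemma polMonomial_eq_monomial {V : Type*} [Fintype V] [DecidableEq V] (k : ℕ) (a : V →₀ ℕ) :
    polMonomial K k a = monomial
      (Finsupp.equivFunOnFinite.symm fun x : V × Fin k => if (x.2 : ℕ) < a x.1 then 1 else 0)
      (1 : K) := by
  unfold polMonomial
  have h1 : ∀ (i : V) (p : Fin k),
      (if (p : ℕ) < a i then (X (i, p) : MvPolynomial (V × Fin k) K) else 1) =
      monomial (Finsupp.single (i, p) (if (p : ℕ) < a i then 1 else 0)) 1 := by
    intro i p
    split_ifs with h
    · rw [X]
    · rw [Finsupp.single_zero, monomial_zero']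
      simp
  simp_rw [h1, prod_monomial_one]
  have h2 : (∑ i : V, ∑ p : Fin k, Finsupp.single (i, p) (if (p : ℕ) < a i then 1 else 0))
      = Finsupp.equivFunOnFinite.symm
          (fun x : V × Fin k => if (x.2 : ℕ) < a x.1 then 1 else 0) := by
    ext x
    obtain ⟨j, q⟩ := x
    rw [Finsupp.finset_sum_apply]
    simp_rw [Finsupp.finset_sum_apply, Finsupp.single_apply]
    rw [Finset.sum_eq_single j]
    · rw [Finset.sum_eq_single q]
      · simp
      · intro p _ hp
        simp only [Prod.mk.injEq, ite_eq_right_iff, and_imp]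
        intro _ h; exact absurd h hp
      · simp
    · intro i _ hi
      apply Finset.sum_eq_zero
      intro p _
      simp only [Prod.mk.injEq, ite_eq_right_iff, and_imp]
      intro h; exact fun _ => absurd h hi
    · simp
  rw [h2]

lemma X_dvd_polMonomial {V : Type*} [Fintype V] (k : ℕ) (a : V →₀ ℕ) (i : V) (p : Fin k)
    (h : (p : ℕ) < a i) : X (i, p) ∣ polMonomial K k a := by
  unfold polMonomial
  refine dvd_trans ?_ (Finset.dvd_prod_of_mem _ (Finset.mem_univ i))
  have := Finset.dvd_prod_of_mem
    (fun p : Fin k => if (p : ℕ) < a i then (X (i, p) : MvPolynomial (V × Fin k) K) else 1)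
    (Finset.mem_univ p)
  simpa only [if_pos h] using this

/-- for any graph `G` and `k ≥ 1`, the polarization of the `k`-th symbolic
power of the cover ideal `J(G)` is the cover ideal of the graph `G_k`:
`(J(G)^{(k)})^{pol} = J(G_k)`. -/
theorem polarization_symbolicPower_coverIdeal {V : Type*} [Fintype V] [DecidableEq V]
    (G : SimpleGraph V) (k : ℕ) (hk : 1 ≤ k) :
    polIdeal K k (coverIdealSymbPow (K := K) G k) = coverIdeal (polGraph G k) := by
  classical
  apply le_antisymm
  · rw [polIdeal, Ideal.span_le]
    rintro f ⟨a, haI, -, rfl⟩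
    simp only [SetLike.mem_coe, coverIdeal, Submodule.mem_iInf]
    intro x y hxy
    obtain ⟨hadj, hle⟩ := hxy
    have hmem : (monomial a (1 : K)) ∈ (Ideal.span {X x.1, X y.1}) ^ k := by
      simp only [coverIdealSymbPow, Submodule.mem_iInf] at haI
      exact haI x.1 y.1 hadj
    have hsupp : k ≤ a x.1 + a y.1 := by
      refine mem_pow_span_pair x.1 y.1 k hmem a ?_
      rw [support_monomial]
      simp
    have hcase : ((x.2 : ℕ) < a x.1) ∨ ((y.2 : ℕ) < a y.1) := by omega
    rcases hcase with h | h
    · obtain ⟨t, ht⟩ := X_dvd_polMonomial (K := K) k a x.1 x.2 h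
      rw [ht]
      exact Ideal.mul_mem_right _ _ (Ideal.subset_span (by simp))
    · obtain ⟨t, ht⟩ := X_dvd_polMonomial (K := K) k a y.1 y.2 h
      rw [ht]
      exact Ideal.mul_mem_right _ _ (Ideal.subset_span (by simp))
  · intro f hf
    have hf' : ∀ c ∈ f.support, ∀ x y : V × Fin k, (polGraph G k).Adj x y →
        1 ≤ c x + c y := by
      intro c hc x y hxy
      have hmem : f ∈ Ideal.span {X x, X y} := by
        simp only [coverIdeal, Submodule.mem_iInf] at hf
        exact hf x y hxy
      exact mem_span_pair_support x y hmem c hc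
    rw [← support_sum_monomial_coeff f]
    apply Ideal.sum_mem
    intro c hc
    -- construct the exponent vector `A`
    set c' : V → ℕ → ℕ := fun i t => if h : t < k then c (i, ⟨t, h⟩) else 0 with hc'
    have hne : ∀ i, {t | c' i t = 0}.Nonempty := fun i => ⟨k, by simp [hc']⟩
    set A : V → ℕ := fun i => sInf {t | c' i t = 0} with hA
    have hAk : ∀ i, A i ≤ k := fun i => Nat.sInf_le (by simp [hc'])
    have hApos : ∀ (i : V) (p : Fin k), (p : ℕ) < A i → 1 ≤ c (i, p) := by
      intro i p hp
      by_contra hcon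
      push_neg at hcon
      have h0 : c' i (p : ℕ) = 0 := by
        simp only [hc']
        rw [dif_pos p.isLt]
        exact Nat.lt_one_iff.mp hcon
      have h1 : A i ≤ (p : ℕ) := Nat.sInf_le h0
      omega
    have hAzero : ∀ i, c' i (A i) = 0 := fun i => Nat.sInf_mem (hne i)
    have hedge : ∀ u v, G.Adj u v → k ≤ A u + A v := by
      intro u v huv
      by_contra hcon
      push_neg at hcon
      have hu : A u < k := by omega
      have hv : A v < k := by omega
      have h1 := hAzero u
      have h2 := hAzero v
      rw [hc'] at h1 h2
      simp only [hu, dif_pos] at h1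
      simp only [hv, dif_pos] at h2
      have := hf' c hc (u, ⟨A u, hu⟩) (v, ⟨A v, hv⟩) ⟨huv, by simp; omega⟩
      omega
    set a : V →₀ ℕ := Finsupp.equivFunOnFinite.symm A with ha
    have haA : ∀ i, a i = A i := fun i => rfl
    set b : (V × Fin k) →₀ ℕ :=
      Finsupp.equivFunOnFinite.symm (fun x : V × Fin k => if (x.2 : ℕ) < a x.1 then 1 else 0)
      with hb
    have hbx : ∀ x : V × Fin k, b x = if (x.2 : ℕ) < a x.1 then 1 else 0 := fun _ => rfl
    have hbc : b ≤ c := by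
      rw [Finsupp.le_def]
      intro x
      rw [hbx]
      split_ifs with h
      · have := hApos x.1 x.2 (by rw [← haA x.1]; exact h)
        simpa using this
      · exact Nat.zero_le _
    have hsymb : (monomial a (1 : K)) ∈ coverIdealSymbPow (K := K) G k := by
      simp only [coverIdealSymbPow, Submodule.mem_iInf]
      intro u v huv
      apply support_le_mem_pow huv.ne
      intro d hd
      rw [support_monomial] at hd
      simp only [one_ne_zero, if_false, Finset.mem_singleton] at hd
      subst hd
      rw [haA, haA]
      exact hedge u v huv
    have hsplit : (monomial c (coeff c f) : MvPolynomial (V × Fin k) K) =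
        monomial (c - b) (coeff c f) * polMonomial K k a := by
      rw [polMonomial_eq_monomial, ← hb, monomial_mul, mul_one, tsub_add_cancel_of_le hbc]
    rw [hsplit]
    exact Ideal.mul_mem_left _ _
      (Ideal.subset_span ⟨a, hsymb, fun i => (haA i) ▸ hAk i, rfl⟩)
end
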